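/- For any vectors u, v ∈ R^n and positive definite matrices A, B ∈ R^{n×n}, (u+v)ᵀ(A+B)⁻¹(u+v) ≤ uᵀA⁻¹u + vᵀB⁻¹v. -/
import Mathlib


open Matrix

lemma aux_quad {n : ℕ} (A : Matrix (Fin n) (Fin n) ℝ) (hA : A.PosDef)
    (u w : Fin n → ℝ) :
    2 * (u ⬝ᵥ w) - w ⬝ᵥ A.mulVec w ≤ u ⬝ᵥ A⁻¹.mulVec u := by
  have hdet : IsUnit A.det := isUnit_iff_ne_zero.mpr hA.det_pos.ne'
  have hsym : Aᵀ = A := by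
    rw [← Matrix.conjTranspose_eq_transpose_of_trivial, hA.isHermitian.eq]
  have hinv : A.mulVec (A⁻¹.mulVec u) = u := by
    rw [Matrix.mulVec_mulVec, Matrix.mul_nonsing_inv _ hdet, Matrix.one_mulVec]
  set z := A⁻¹.mulVec u - w with hz
  have h0 : 0 ≤ z ⬝ᵥ A.mulVec z := hA.posSemidef.re_dotProduct_nonneg z
  have hexp : z ⬝ᵥ A.mulVec z
      = u ⬝ᵥ A⁻¹.mulVec u - 2 * (u ⬝ᵥ w) + w ⬝ᵥ A.mulVec w := by
    have h1 : (A⁻¹.mulVec u) ⬝ᵥ (A.mulVec w) = u ⬝ᵥ w := by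
      rw [Matrix.dotProduct_mulVec, ← Matrix.mulVec_transpose, hsym, hinv]
    have h2 : (A⁻¹.mulVec u) ⬝ᵥ u = u ⬝ᵥ A⁻¹.mulVec u := dotProduct_comm _ _
    have h3 : w ⬝ᵥ u = u ⬝ᵥ w := dotProduct_comm _ _
    rw [hz, Matrix.mulVec_sub, hinv, sub_dotProduct, dotProduct_sub,
      dotProduct_sub, h1, h2, h3]
    ring
  linarith [h0, hexp]

/-- For vectors `u, v` and positive definite matrices `A, B`:
`(u+v)ᵀ (A+B)⁻¹ (u+v) ≤ uᵀ A⁻¹ u + vᵀ B⁻¹ v`. -/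
theorem quad_form_inv_add_le {n : ℕ} (A B : Matrix (Fin n) (Fin n) ℝ)
    (hA : A.PosDef) (hB : B.PosDef) (u v : Fin n → ℝ) :
    (u + v) ⬝ᵥ (A + B)⁻¹.mulVec (u + v) ≤
      u ⬝ᵥ A⁻¹.mulVec u + v ⬝ᵥ B⁻¹.mulVec v := by
  have hAB : (A + B).PosDef := hA.add hB
  set w := (A + B)⁻¹.mulVec (u + v) with hw
  have hinv : (A + B).mulVec w = u + v := by
    rw [hw, Matrix.mulVec_mulVec,
      Matrix.mul_nonsing_inv _ (isUnit_iff_ne_zero.mpr hAB.det_pos.ne'),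
      Matrix.one_mulVec]
  have hu := aux_quad A hA u w
  have hv := aux_quad B hB v w
  have hsplit : w ⬝ᵥ A.mulVec w + w ⬝ᵥ B.mulVec w = u ⬝ᵥ w + v ⬝ᵥ w := by
    have : w ⬝ᵥ (A + B).mulVec w = w ⬝ᵥ (u + v) := by rw [hinv]
    rw [Matrix.add_mulVec, dotProduct_add] at this
    rw [this, dotProduct_add, dotProduct_comm w u, dotProduct_comm w v]
  have hlhs : (u + v) ⬝ᵥ w = u ⬝ᵥ w + v ⬝ᵥ w := add_dotProduct _ _ _
  linarith [hu, hv, hsplit, hlhs]
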